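/- For every type A of system F and every type variable X: (1) α : O ⊢_F 𝓘_{A,X} : ∀Y { A[Y/X] → A[Y°/X] }, and (2) α : O ⊢_F 𝓙_{A,X} : ∀Y { A[Y°/X] → A[Y/X] }, where Y is a fresh variable. -/

import Mathlib

set_option maxHeartbeats 1000000


/-- Untyped λ-terms in de Bruijn representation. -/
inductive Trm : Type
  | var : ℕ → Trm
  | app : Trm → Trm → Trm
  | lam : Trm → Trm
  deriving DecidableEq

namespace Trm

/-- The set of free variables of a term (as de Bruijn indices). -/
def fv : Trm → Set ℕ
  | var n => {n}
  | app u v => fv u ∪ fv v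
  | lam u => {n | n + 1 ∈ fv u}

/-- A term is closed if it has no free variables. -/
def Closed (t : Trm) : Prop := fv t = ∅

/-- λI-terms: abstraction is allowed only on variables occurring free in the body. -/
inductive IsLI : Trm → Prop
  | var (n : ℕ) : IsLI (var n)
  | app {u v : Trm} : IsLI u → IsLI v → IsLI (app u v)
  | lam {u : Trm} : IsLI u → 0 ∈ fv u → IsLI (lam u)

/-- Lifting of free variables ≥ d. -/
def lift (d : ℕ) : Trm → Trm
  | var n => if n < d then var n else var (n + 1)
  | app u v => app (lift d u) (lift d v)
  | lam u => lam (lift (d + 1) u)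

def liftTimes (k : ℕ) (t : Trm) : Trm := (lift 0)^[k] t

/-- Capture-avoiding substitution of the k-th free variable. -/
def subst : Trm → ℕ → Trm → Trm
  | var n, k, v => if n < k then var n else if n = k then liftTimes k v else var (n - 1)
  | app a b, k, v => app (subst a k v) (subst b k v)
  | lam a, k, v => lam (subst a (k + 1) v)

end Trm

/-- Types of system F with a fixed type constant O, in de Bruijn representation. -/
inductive Ty : Type
  | var : ℕ → Ty
  | cO : Ty
  | arr : Ty → Ty → Ty
  | all : Ty → Ty
  deriving DecidableEq

namespace Ty

/-- Free type variables. -/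
def tfv : Ty → Set ℕ
  | var n => {n}
  | cO => ∅
  | arr A B => tfv A ∪ tfv B
  | all A => {n | n + 1 ∈ tfv A}

/-- Lifting of free type variables ≥ d. -/
def tlift (d : ℕ) : Ty → Ty
  | var n => if n < d then var n else var (n + 1)
  | cO => cO
  | arr A B => arr (tlift d A) (tlift d B)
  | all A => all (tlift (d + 1) A)

def tliftTimes (k : ℕ) (A : Ty) : Ty := (tlift 0)^[k] A

/-- Substitution of the k-th free type variable. -/
def tsubst : Ty → ℕ → Ty → Ty
  | var n, k, G => if n < k then var n else if n = k then tliftTimes k G else var (n - 1)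
  | cO, _, _ => cO
  | arr A B, k, G => arr (tsubst A k G) (tsubst B k G)
  | all A, k, G => all (tsubst A (k + 1) G)

/-- Proper types. -/
def Proper : Ty → Prop
  | var _ => True
  | cO => True
  | arr A B => Proper A ∧ Proper B
  | all A => Proper A ∧ 0 ∈ tfv A

end Ty

/-- Typing judgments of system F (restricted to proper types:
the rule (∀e) requires X free in A and instantiates at proper types only). -/
inductive Typing : List Ty → Trm → Ty → Prop
  | ax {Γ : List Ty} {n : ℕ} {A : Ty} :
      Γ[n]? = some A → (∀ B ∈ Γ, B.Proper) → Typing Γ (.var n) A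
  | arrI {Γ : List Ty} {A B : Ty} {t : Trm} :
      A.Proper → Typing (A :: Γ) t B → Typing Γ (.lam t) (.arr A B)
  | arrE {Γ : List Ty} {A B : Ty} {u v : Trm} :
      Typing Γ u (.arr A B) → Typing Γ v A → Typing Γ (.app u v) B
  | allI {Γ : List Ty} {A : Ty} {t : Trm} :
      0 ∈ Ty.tfv A → Typing (Γ.map (Ty.tlift 0)) t A → Typing Γ t (.all A)
  | allE {Γ : List Ty} {A : Ty} {t : Trm} (G : Ty) :
      G.Proper → 0 ∈ Ty.tfv A → Typing Γ t (.all A) → Typing Γ t (A.tsubst 0 G)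

/-- A[G/X] placed under one extra (second-order) binder: the occurrences of the
ambient variable X are replaced by G (expressed relative to the new binder, so that
`Ty.var 0` in G denotes the freshly bound variable Y), and the other free variables
are shifted to account for the new binder. -/
def repl (X : ℕ) (G : Ty) : ℕ → Ty → Ty
  | d, .var n => if n < d then .var n else if n = X + d then Ty.tliftTimes d G else .var (n + 1)
  | _, .cO => .cO
  | d, .arr A B => .arr (repl X G d A) (repl X G d B)
  | d, .all A => .all (repl X G (d + 1) A)

/-- Conjunction A ∧ B = ∀X {(A → (B → X)) → X} with X fresh. -/
def conj (A B : Ty) : Ty :=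
  .all (.arr (.arr (A.tlift 0) (.arr (B.tlift 0) (.var 0))) (.var 0))

/-- Y° = O → (Y ∧ O), where Y is the freshly bound variable `Ty.var 0`. -/
def Ydeg : Ty := .arr .cO (conj (.var 0) .cO)

/-- U = λx λd ⟨x, α⟩ where α is the term variable with de Bruijn index a. -/
def Uat (a : ℕ) : Trm :=
  .lam (.lam (.lam (.app (.app (.var 0) (.var 2)) (.var (a + 3)))))

/-- V = λx (x) α 𝟏 where α is the term variable with de Bruijn index a. -/
def Vat (a : ℕ) : Trm :=
  .lam (.app (.app (.var 0) (.var (a + 1))) (.lam (.lam (.var 1))))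

mutual
  /-- The term 𝓘_{A,X}; the parameter a is the de Bruijn index of the constant α. -/
  def Itm : Ty → ℕ → ℕ → Trm
    | .var Y, X, a => if Y = X then Uat a else .lam (.var 0)
    | .cO, _, _ => .lam (.var 0)
    | .arr B C, X, a =>
        .lam (.lam (.app (Itm C X (a + 2)) (.app (.var 1) (.app (Jtm B X (a + 2)) (.var 0)))))
    | .all B, X, a => .lam (.app (Itm B (X + 1) (a + 1)) (.var 0))
  /-- The term 𝓙_{A,X}. -/
  def Jtm : Ty → ℕ → ℕ → Trm
    | .var Y, X, a => if Y = X then Vat a else .lam (.var 0)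
    | .cO, _, _ => .lam (.var 0)
    | .arr B C, X, a =>
        .lam (.lam (.app (Jtm C X (a + 2)) (.app (.var 1) (.app (Itm B X (a + 2)) (.var 0)))))
    | .all B, X, a => .lam (.app (Jtm B (X + 1) (a + 1)) (.var 0))
end

namespace Ty

/-- Capture-avoiding substitution of variable `X + d` by `G` (lifted), leaving
other variables unchanged. -/
def sub (X : ℕ) (G : Ty) : ℕ → Ty → Ty
  | d, var n => if n = X + d then tliftTimes d G else var n
  | _, cO => cO
  | d, arr A B => arr (sub X G d A) (sub X G d B)
  | d, all A => all (sub X G (d + 1) A)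

lemma mem_tfv_tlift {A : Ty} {n : ℕ} (d : ℕ) (h : n ∈ tfv A) :
    (if n < d then n else n + 1) ∈ tfv (tlift d A) := by
  induction A generalizing n d with
  | var m =>
      simp only [tfv, Set.mem_singleton_iff] at h
      subst h
      simp only [tlift]
      split <;> simp [tfv]
  | cO => simp [tfv] at h
  | arr B C ihB ihC =>
      simp only [tfv, Set.mem_union] at h ⊢
      rcases h with h | h
      · exact Or.inl (ihB d h)
      · exact Or.inr (ihC d h)
  | all B ih =>
      simp only [tfv, tlift, Set.mem_setOf_eq] at h ⊢
      have := ih (d + 1) h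
      have he : (if n < d then n else n + 1) + 1 = if n + 1 < d + 1 then n + 1 else n + 2 := by
        split <;> split <;> omega
      rw [he]
      exact this

lemma mem_tfv_tlift_lt {A : Ty} {n d : ℕ} (h : n ∈ tfv A) (hn : n < d) :
    n ∈ tfv (tlift d A) := by
  have := mem_tfv_tlift d h
  rwa [if_pos hn] at this

lemma mem_tfv_tlift_ge {A : Ty} {n d : ℕ} (h : n ∈ tfv A) (hn : d ≤ n) :
    n + 1 ∈ tfv (tlift d A) := by
  have := mem_tfv_tlift d h
  rwa [if_neg (by omega)] at this

lemma proper_tlift {A : Ty} (d : ℕ) (h : A.Proper) : (tlift d A).Proper := by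
  induction A generalizing d with
  | var m =>
      simp only [tlift]
      split <;> trivial
  | cO => trivial
  | arr B C ihB ihC => exact ⟨ihB d h.1, ihC d h.2⟩
  | all B ih =>
      exact ⟨ih (d + 1) h.1, mem_tfv_tlift_lt h.2 (Nat.succ_pos d)⟩

lemma mem_tfv_tliftTimes {G : Ty} {n : ℕ} (d : ℕ) (h : n ∈ tfv G) :
    n + d ∈ tfv (tliftTimes d G) := by
  induction d with
  | zero => simpa [tliftTimes]
  | succ d ih =>
      have : tliftTimes (d + 1) G = tlift 0 (tliftTimes d G) := by
        simp [tliftTimes, Function.iterate_succ_apply']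
      rw [this, show n + (d + 1) = (n + d) + 1 from rfl]
      exact mem_tfv_tlift_ge ih (Nat.zero_le _)

lemma proper_tliftTimes {G : Ty} (d : ℕ) (h : G.Proper) : (tliftTimes d G).Proper := by
  induction d with
  | zero => simpa [tliftTimes]
  | succ d ih =>
      have : tliftTimes (d + 1) G = tlift 0 (tliftTimes d G) := by
        simp [tliftTimes, Function.iterate_succ_apply']
      rw [this]
      exact proper_tlift 0 ih

lemma tliftTimes_var (d : ℕ) : tliftTimes d (var 0) = var d := by
  induction d with
  | zero => simp [tliftTimes]
  | succ d ih =>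
      have : tliftTimes (d + 1) (var 0) = tlift 0 (tliftTimes d (var 0)) := by
        simp [tliftTimes, Function.iterate_succ_apply']
      rw [this, ih]
      simp [tlift]

lemma tsubst_tlift_var (C : Ty) (d : ℕ) : tsubst (tlift (d + 1) C) d (var 0) = C := by
  induction C generalizing d with
  | var n =>
      simp only [tlift]
      split
      · simp only [tsubst]
        split
        · rfl
        · split
          · rename_i h1 h2
            rw [h2, tliftTimes_var]
          · omega
      · simp only [tsubst]
        rw [if_neg (by omega), if_neg (by omega)]
        simp
  | cO => rfl
  | arr B C ihB ihC => simp [tlift, tsubst, ihB, ihC]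
  | all B ih => simp [tlift, tsubst, ih]

lemma mem_tfv_sub {A G : Ty} {n X d : ℕ} (h : n ∈ tfv A) (hn : n ≠ X + d) :
    n ∈ tfv (sub X G d A) := by
  induction A generalizing n d with
  | var m =>
      simp only [tfv, Set.mem_singleton_iff] at h
      subst h
      simp [sub, if_neg hn, tfv]
  | cO => simp [tfv] at h
  | arr B C ihB ihC =>
      simp only [tfv, Set.mem_union] at h ⊢
      rcases h with h | h
      · exact Or.inl (ihB h hn)
      · exact Or.inr (ihC h hn)
  | all B ih =>
      simp only [tfv, Set.mem_setOf_eq, sub] at h ⊢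
      exact ih h (by omega)

lemma mem_tfv_sub_G {A G : Ty} {m X : ℕ} (d : ℕ) (h : X + d ∈ tfv A) (hm : m ∈ tfv G) :
    m + d ∈ tfv (sub X G d A) := by
  induction A generalizing d with
  | var n =>
      simp only [tfv, Set.mem_singleton_iff] at h
      simp only [sub, if_pos h.symm]
      exact mem_tfv_tliftTimes d hm
  | cO => simp [tfv] at h
  | arr B C ihB ihC =>
      simp only [tfv, Set.mem_union] at h ⊢
      rcases h with h | h
      · exact Or.inl (ihB d h)
      · exact Or.inr (ihC d h)
  | all B ih =>
      simp only [tfv, Set.mem_setOf_eq, sub] at h ⊢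
      have h' : X + (d + 1) ∈ tfv B := h
      exact ih (d + 1) h'

lemma proper_sub {A G : Ty} (X d : ℕ) (hA : A.Proper) (hG : G.Proper) :
    (sub X G d A).Proper := by
  induction A generalizing d with
  | var n =>
      simp only [sub]
      split
      · exact proper_tliftTimes d hG
      · trivial
  | cO => trivial
  | arr B C ihB ihC => exact ⟨ihB d hA.1, ihC d hA.2⟩
  | all B ih =>
      exact ⟨ih (d + 1) hA.1, mem_tfv_sub hA.2 (by omega)⟩

lemma sub_succ (X : ℕ) (G : Ty) (B : Ty) (d : ℕ) :
    sub X G (d + 1) B = sub (X + 1) (tlift 0 G) d B := by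
  induction B generalizing d with
  | var n =>
      have ht : tliftTimes (d + 1) G = tliftTimes d (tlift 0 G) := by
        simp [tliftTimes, Function.iterate_succ_apply]
      by_cases h : n = X + (d + 1)
      · simp only [sub, if_pos h, if_pos (show n = X + 1 + d by omega), ht]
      · simp only [sub, if_neg h, if_neg (show ¬ n = X + 1 + d by omega)]
  | cO => rfl
  | arr B C ihB ihC => simp [sub, ihB, ihC]
  | all B ih => simp [sub, ih]

lemma repl_eq_sub (X : ℕ) (G : Ty) (A : Ty) (d : ℕ) :
    repl X G d A = sub (X + 1) G d (tlift d A) := by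
  induction A generalizing d with
  | var n =>
      by_cases h1 : n < d
      · have h2 : ¬ n = X + 1 + d := by omega
        simp [repl, tlift, sub, h1, h2]
      · by_cases h2 : n = X + d
        · have h3 : n + 1 = X + 1 + d := by omega
          simp [repl, tlift, sub, h1, h2, h3, show X + d + 1 = X + 1 + d by omega]
        · have h3 : ¬ n + 1 = X + 1 + d := by omega
          simp [repl, tlift, sub, h1, h2, h3]
  | cO => rfl
  | arr B C ihB ihC => simp [repl, tlift, sub, ihB, ihC]
  | all B ih => simp [repl, tlift, sub, ih]

end Ty

/-- `Y° = O → (Y ∧ O)` where `Y` is the variable with index `k`. -/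
def Ydegk (k : ℕ) : Ty :=
  .arr .cO (.all (.arr (.arr (.var (k + 1)) (.arr .cO (.var 0))) (.var 0)))

lemma Ydeg_eq : Ydeg = Ydegk 0 := rfl

lemma tlift_Ydegk (k : ℕ) : Ty.tlift 0 (Ydegk k) = Ydegk (k + 1) := by
  simp [Ydegk, Ty.tlift]
open Ty in
lemma proper_Ydegk (k : ℕ) : (Ydegk k).Proper := by
  refine ⟨trivial, ⟨⟨⟨trivial, trivial, trivial⟩, trivial⟩, ?_⟩⟩
  simp [Ydegk, Ty.tfv]

lemma proper_map_tlift {Γ : List Ty} (h : ∀ B ∈ Γ, Ty.Proper B) :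
    ∀ B ∈ Γ.map (Ty.tlift 0), Ty.Proper B := by
  intro B hB
  obtain ⟨C, hC, rfl⟩ := List.mem_map.mp hB
  exact Ty.proper_tlift 0 (h C hC)

lemma itm_tlift (C : Ty) : ∀ (d X a : ℕ), d ≤ X →
    (Itm (Ty.tlift d C) (X + 1) a = Itm C X a ∧ Jtm (Ty.tlift d C) (X + 1) a = Jtm C X a) := by
  induction C with
  | var Y =>
      intro d X a hdX
      by_cases h : Y < d
      · have h1 : ¬ Y = X + 1 := by omega
        have h2 : ¬ Y = X := by omega
        simp [Ty.tlift, h, Itm, Jtm, h1, h2]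
      · have h1 : (Y + 1 = X + 1) = (Y = X) := by simp
        simp [Ty.tlift, h, Itm, Jtm, h1]
  | cO => intro d X a hdX; simp [Ty.tlift, Itm, Jtm]
  | arr B C ihB ihC =>
      intro d X a hdX
      simp [Ty.tlift, Itm, Jtm, (ihB d X (a+2) hdX).1, (ihB d X (a+2) hdX).2,
        (ihC d X (a+2) hdX).1, (ihC d X (a+2) hdX).2]
  | all B ih =>
      intro d X a hdX
      simp [Ty.tlift, Itm, Jtm, (ih (d+1) (X+1) (a+1) (by omega)).1,
        (ih (d+1) (X+1) (a+1) (by omega)).2]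

lemma main_IJ (A : Ty) : ∀ (X k a : ℕ) (Γ : List Ty), A.Proper →
    (∀ B ∈ Γ, B.Proper) → Γ[a]? = some .cO →
    Typing Γ (Itm A X a) (.arr (Ty.sub X (.var k) 0 A) (Ty.sub X (Ydegk k) 0 A)) ∧
    Typing Γ (Jtm A X a) (.arr (Ty.sub X (Ydegk k) 0 A) (Ty.sub X (.var k) 0 A)) := by
  induction A with
  | var Y =>
      intro X k a Γ hA hΓ ha
      by_cases hYX : Y = X
      · subst hYX
        have hs : ∀ G : Ty, Ty.sub Y G 0 (.var Y) = G := by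
          intro G; simp [Ty.sub, Ty.tliftTimes]
        rw [hs, hs]
        simp only [Itm, Jtm, if_pos rfl]
        constructor
        · -- U : var k → Ydegk k
          refine Typing.arrI trivial (Typing.arrI trivial (Typing.allI ?_ ?_))
          · simp [Ty.tfv]
          · have hctx : (Ty.cO :: Ty.var k :: Γ).map (Ty.tlift 0)
                = Ty.cO :: Ty.var (k+1) :: Γ.map (Ty.tlift 0) := by
              simp [Ty.tlift]
            rw [hctx]
            refine Typing.arrI ⟨trivial, trivial, trivial⟩ ?_
            have hP : ∀ T ∈ (Ty.arr (Ty.var (k+1)) (Ty.arr Ty.cO (Ty.var 0)) ::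
                Ty.cO :: Ty.var (k+1) :: Γ.map (Ty.tlift 0)), T.Proper := by
              intro T hT
              simp only [List.mem_cons] at hT
              rcases hT with rfl | rfl | rfl | hT
              · exact ⟨trivial, trivial, trivial⟩
              · trivial
              · trivial
              · exact proper_map_tlift hΓ T hT
            have hx0 : Typing (Ty.arr (Ty.var (k+1)) (Ty.arr Ty.cO (Ty.var 0)) ::
                Ty.cO :: Ty.var (k+1) :: Γ.map (Ty.tlift 0)) (.var 0)
                (.arr (.var (k+1)) (.arr .cO (.var 0))) := Typing.ax (by simp) hP
            have hx2 : Typing (Ty.arr (Ty.var (k+1)) (Ty.arr Ty.cO (Ty.var 0)) ::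
                Ty.cO :: Ty.var (k+1) :: Γ.map (Ty.tlift 0)) (.var 2)
                (.var (k+1)) := Typing.ax (by simp) hP
            have hxa : Typing (Ty.arr (Ty.var (k+1)) (Ty.arr Ty.cO (Ty.var 0)) ::
                Ty.cO :: Ty.var (k+1) :: Γ.map (Ty.tlift 0)) (.var (a+3))
                Ty.cO := Typing.ax (by simp [List.getElem?_map, ha, Ty.tlift]) hP
            exact Typing.arrE (Typing.arrE hx0 hx2) hxa
        · -- V : Ydegk k → var k
          refine Typing.arrI (proper_Ydegk k) ?_
          have hP : ∀ T ∈ (Ydegk k :: Γ), T.Proper := by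
            intro T hT
            simp only [List.mem_cons] at hT
            rcases hT with rfl | hT
            · exact proper_Ydegk k
            · exact hΓ T hT
          have h1 : Typing (Ydegk k :: Γ) (.var 0)
              (.arr .cO (.all (.arr (.arr (.var (k+1)) (.arr .cO (.var 0))) (.var 0)))) :=
            Typing.ax (by simp [Ydegk]) hP
          have h2 : Typing (Ydegk k :: Γ) (.var (a+1)) .cO :=
            Typing.ax (by simp [ha]) hP
          have h3 := Typing.arrE h1 h2
          have h4 := Typing.allE (A := .arr (.arr (.var (k+1)) (.arr .cO (.var 0))) (.var 0))
            (.var k) trivial (by simp [Ty.tfv]) h3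
          have he : Ty.tsubst (.arr (.arr (.var (k+1)) (.arr .cO (.var 0))) (.var 0)) 0 (.var k)
              = .arr (.arr (.var k) (.arr .cO (.var k))) (.var k) := by
            simp [Ty.tsubst, Ty.tliftTimes]
          rw [he] at h4
          refine Typing.arrE h4 (Typing.arrI trivial (Typing.arrI trivial (Typing.ax (by simp) ?_)))
          intro T hT
          simp only [List.mem_cons] at hT
          rcases hT with rfl | rfl | rfl | hT
          · trivial
          · trivial
          · exact proper_Ydegk k
          · exact hΓ T hT
      · -- Y ≠ X : identity
        have hs : ∀ G : Ty, Ty.sub X G 0 (.var Y) = .var Y := by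
          intro G; simp [Ty.sub, hYX]
        rw [hs, hs]
        simp only [Itm, Jtm, if_neg hYX]
        have hP : ∀ T ∈ (Ty.var Y :: Γ), T.Proper := by
          intro T hT
          simp only [List.mem_cons] at hT
          rcases hT with rfl | hT
          · trivial
          · exact hΓ T hT
        exact ⟨Typing.arrI trivial (Typing.ax (by simp) hP), Typing.arrI trivial (Typing.ax (by simp) hP)⟩
  | cO =>
      intro X k a Γ hA hΓ ha
      simp only [Itm, Jtm, Ty.sub]
      have hP : ∀ T ∈ (Ty.cO :: Γ), T.Proper := by
        intro T hT
        simp only [List.mem_cons] at hT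
        rcases hT with rfl | hT
        · trivial
        · exact hΓ T hT
      exact ⟨Typing.arrI trivial (Typing.ax (by simp) hP), Typing.arrI trivial (Typing.ax (by simp) hP)⟩
  | arr B C ihB ihC =>
      intro X k a Γ hA hΓ ha
      obtain ⟨hB, hC⟩ := hA
      simp only [Itm, Jtm, Ty.sub]
      set B1 := Ty.sub X (.var k) 0 B with hB1
      set B2 := Ty.sub X (Ydegk k) 0 B with hB2
      set C1 := Ty.sub X (.var k) 0 C with hC1
      set C2 := Ty.sub X (Ydegk k) 0 C with hC2
      have pB1 : B1.Proper := Ty.proper_sub X 0 hB trivial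
      have pB2 : B2.Proper := Ty.proper_sub X 0 hB (proper_Ydegk k)
      have pC1 : C1.Proper := Ty.proper_sub X 0 hC trivial
      have pC2 : C2.Proper := Ty.proper_sub X 0 hC (proper_Ydegk k)
      constructor
      · refine Typing.arrI ⟨pB1, pC1⟩ (Typing.arrI pB2 ?_)
        have hP : ∀ T ∈ (B2 :: Ty.arr B1 C1 :: Γ), T.Proper := by
          intro T hT
          simp only [List.mem_cons] at hT
          rcases hT with rfl | rfl | hT
          · exact pB2
          · exact ⟨pB1, pC1⟩
          · exact hΓ T hT
        have ha2 : (B2 :: Ty.arr B1 C1 :: Γ)[a+2]? = some Ty.cO := by simp [ha]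
        have IC := (ihC X k (a+2) _ hC hP ha2).1
        have IB := (ihB X k (a+2) _ hB hP ha2).2
        exact Typing.arrE IC (Typing.arrE (Typing.ax (by simp [B1, B2, C1, C2]) hP)
          (Typing.arrE IB (Typing.ax (by simp [B1, B2, C1, C2]) hP)))
      · refine Typing.arrI ⟨pB2, pC2⟩ (Typing.arrI pB1 ?_)
        have hP : ∀ T ∈ (B1 :: Ty.arr B2 C2 :: Γ), T.Proper := by
          intro T hT
          simp only [List.mem_cons] at hT
          rcases hT with rfl | rfl | hT
          · exact pB1
          · exact ⟨pB2, pC2⟩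
          · exact hΓ T hT
        have ha2 : (B1 :: Ty.arr B2 C2 :: Γ)[a+2]? = some Ty.cO := by simp [ha]
        have JC := (ihC X k (a+2) _ hC hP ha2).2
        have JB := (ihB X k (a+2) _ hB hP ha2).1
        exact Typing.arrE JC (Typing.arrE (Typing.ax (by simp [B1, B2, C1, C2]) hP)
          (Typing.arrE JB (Typing.ax (by simp [B1, B2, C1, C2]) hP)))
  | all B ih =>
      intro X k a Γ hA hΓ ha
      obtain ⟨hB, h0⟩ := hA
      simp only [Itm, Jtm]
      have e1 : Ty.sub X (.var k) 0 (.all B) = .all (Ty.sub (X+1) (.var (k+1)) 0 B) := by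
        show Ty.all (Ty.sub X (.var k) 1 B) = _
        rw [Ty.sub_succ]
        simp [Ty.tlift]
      have e2 : Ty.sub X (Ydegk k) 0 (.all B) = .all (Ty.sub (X+1) (Ydegk (k+1)) 0 B) := by
        show Ty.all (Ty.sub X (Ydegk k) 1 B) = _
        rw [Ty.sub_succ, tlift_Ydegk]
      rw [e1, e2]
      set P := Ty.sub (X+1) (.var (k+1)) 0 B with hPdef
      set Q := Ty.sub (X+1) (Ydegk (k+1)) 0 B with hQdef
      have pP : P.Proper := Ty.proper_sub (X+1) 0 hB trivial
      have pQ : Q.Proper := Ty.proper_sub (X+1) 0 hB (proper_Ydegk (k+1))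
      have h0P : (0 : ℕ) ∈ Ty.tfv P := Ty.mem_tfv_sub h0 (by omega)
      have h0Q : (0 : ℕ) ∈ Ty.tfv Q := Ty.mem_tfv_sub h0 (by omega)
      constructor
      · refine Typing.arrI ⟨pP, h0P⟩ (Typing.allI h0Q ?_)
        have hctx : ((Ty.all P) :: Γ).map (Ty.tlift 0)
            = Ty.all (Ty.tlift 1 P) :: Γ.map (Ty.tlift 0) := by
          simp [Ty.tlift]
        rw [hctx]
        have hP' : ∀ T ∈ (Ty.all (Ty.tlift 1 P) :: Γ.map (Ty.tlift 0)), T.Proper := by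
          intro T hT
          simp only [List.mem_cons] at hT
          rcases hT with rfl | hT
          · exact ⟨Ty.proper_tlift 1 pP, Ty.mem_tfv_tlift_lt h0P (by omega)⟩
          · exact proper_map_tlift hΓ T hT
        have ha' : (Ty.all (Ty.tlift 1 P) :: Γ.map (Ty.tlift 0))[a+1]? = some Ty.cO := by
          simp [List.getElem?_map, ha]; rfl
        have IH := (ih (X+1) (k+1) (a+1) _ hB hP' ha').1
        refine Typing.arrE IH ?_
        have hx : Typing (Ty.all (Ty.tlift 1 P) :: Γ.map (Ty.tlift 0)) (.var 0)
            (.all (Ty.tlift 1 P)) := Typing.ax (by simp) hP'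
        have h5 := Typing.allE (A := Ty.tlift 1 P) (.var 0) trivial
          (Ty.mem_tfv_tlift_lt h0P (by omega)) hx
        rwa [Ty.tsubst_tlift_var P 0] at h5
      · refine Typing.arrI ⟨pQ, h0Q⟩ (Typing.allI h0P ?_)
        have hctx : ((Ty.all Q) :: Γ).map (Ty.tlift 0)
            = Ty.all (Ty.tlift 1 Q) :: Γ.map (Ty.tlift 0) := by
          simp [Ty.tlift]
        rw [hctx]
        have hP' : ∀ T ∈ (Ty.all (Ty.tlift 1 Q) :: Γ.map (Ty.tlift 0)), T.Proper := by
          intro T hT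
          simp only [List.mem_cons] at hT
          rcases hT with rfl | hT
          · exact ⟨Ty.proper_tlift 1 pQ, Ty.mem_tfv_tlift_lt h0Q (by omega)⟩
          · exact proper_map_tlift hΓ T hT
        have ha' : (Ty.all (Ty.tlift 1 Q) :: Γ.map (Ty.tlift 0))[a+1]? = some Ty.cO := by
          simp [List.getElem?_map, ha]; rfl
        have IH := (ih (X+1) (k+1) (a+1) _ hB hP' ha').2
        refine Typing.arrE IH ?_
        have hx : Typing (Ty.all (Ty.tlift 1 Q) :: Γ.map (Ty.tlift 0)) (.var 0)
            (.all (Ty.tlift 1 Q)) := Typing.ax (by simp) hP'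
        have h5 := Typing.allE (A := Ty.tlift 1 Q) (.var 0) trivial
          (Ty.mem_tfv_tlift_lt h0Q (by omega)) hx
        rwa [Ty.tsubst_tlift_var Q 0] at h5

/-- α : O ⊢_F 𝓘_{A,X} : ∀Y {A[Y/X] → A[Y°/X]} and
α : O ⊢_F 𝓙_{A,X} : ∀Y {A[Y°/X] → A[Y/X]} (A a proper type with X free in A). -/
theorem stmt9 (A : Ty) (X : ℕ) (hA : A.Proper) (hX : X ∈ Ty.tfv A) :
    Typing [Ty.cO] (Itm A X 0)
      (.all (.arr (repl X (Ty.var 0) 0 A) (repl X Ydeg 0 A))) ∧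
    Typing [Ty.cO] (Jtm A X 0)
      (.all (.arr (repl X Ydeg 0 A) (repl X (Ty.var 0) 0 A))) := by
  have hP1 : ∀ B ∈ [Ty.cO], B.Proper := by
    intro B hB
    simp only [List.mem_cons] at hB
    rcases hB with rfl | h
    · trivial
    · simp at h
  have hA' := Ty.proper_tlift 0 hA
  have hc : ([Ty.cO] : List Ty)[0]? = some Ty.cO := by simp
  have h := main_IJ (Ty.tlift 0 A) (X + 1) 0 0 [Ty.cO] hA' hP1 hc
  have hX' : X + 1 + 0 ∈ Ty.tfv (Ty.tlift 0 A) := Ty.mem_tfv_tlift_ge hX (Nat.zero_le X)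
  have h0v : (0 : ℕ) ∈ Ty.tfv (Ty.var 0) := by simp [Ty.tfv]
  have hfree1 : (0 : ℕ) ∈ Ty.tfv (Ty.sub (X + 1) (Ty.var 0) 0 (Ty.tlift 0 A)) :=
    Ty.mem_tfv_sub_G 0 hX' h0v
  rw [Ydeg_eq, Ty.repl_eq_sub X (Ty.var 0) A 0, Ty.repl_eq_sub X (Ydegk 0) A 0,
    show Itm A X 0 = Itm (Ty.tlift 0 A) (X + 1) 0 from ((itm_tlift A 0 X 0 (Nat.zero_le X)).1).symm,
    show Jtm A X 0 = Jtm (Ty.tlift 0 A) (X + 1) 0 from ((itm_tlift A 0 X 0 (Nat.zero_le X)).2).symm]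
  constructor
  · exact Typing.allI (Or.inl hfree1) (by simpa [show Ty.tlift 0 Ty.cO = Ty.cO from rfl] using h.1)
  · exact Typing.allI (Or.inr hfree1) (by simpa [show Ty.tlift 0 Ty.cO = Ty.cO from rfl] using h.2)
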